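/- arXiv:2603.27495 — 5 statements merged into one kernel-verified Lean document; each statement's English description precedes it below -/
import Mathlib

section
/- Let K ≥ 2 be an integer and let R > 1 and ζ > 1 be reals. Set η_H := 1/(R^K + R^{-K}), a := ζR + ζ⁻¹R⁻¹, b := R + R⁻¹, and define F : ℝ → ℝ by F(ω) := ((2cos ω − a)/(2cos ω − b))·(1 − 2η_H cos(Kω)). If K² < (1/η_H)·((a − b)(1 − 2η_H))/((a − 2cos(π/K))·(b − 2cos(π/K))), then F(ω) ≤ F(0) for every ω ∈ [0, 2π); that is, ω = 0 is a global maximizer of F on [0, 2π). -/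
open Real

-- |sin (n x)| ≤ n |sin x|
lemma abs_sin_nat_mul_le (n : ℕ) (x : ℝ) : |Real.sin (n * x)| ≤ n * |Real.sin x| := by
  induction n with
  | zero => simp
  | succ n ih =>
    have : ((n+1 : ℕ) : ℝ) * x = n * x + x := by push_cast; ring
    rw [this, Real.sin_add]
    calc |Real.sin (n*x) * Real.cos x + Real.cos (n*x) * Real.sin x|
        ≤ |Real.sin (n*x) * Real.cos x| + |Real.cos (n*x) * Real.sin x| := abs_add_le _ _
      _ ≤ |Real.sin (n*x)| * 1 + 1 * |Real.sin x| := by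
          rw [abs_mul, abs_mul]
          gcongr
          all_goals exact Real.abs_cos_le_one _
      _ ≤ n * |Real.sin x| + 1 * |Real.sin x| := by
          rw [mul_one]; gcongr
      _ = ((n+1 : ℕ) : ℝ) * |Real.sin x| := by push_cast; ring

lemma one_sub_cos_eq (x : ℝ) : 1 - Real.cos x = 2 * Real.sin (x/2) ^ 2 := by
  have h := Real.cos_two_mul (x/2)
  have h2 : 2 * (x/2) = x := by ring
  rw [h2] at h
  have := Real.sin_sq_add_cos_sq (x/2)
  nlinarith

lemma one_sub_cos_nat_mul_le (n : ℕ) (x : ℝ) :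
    1 - Real.cos (n * x) ≤ n^2 * (1 - Real.cos x) := by
  rw [one_sub_cos_eq, one_sub_cos_eq]
  have h : (n : ℝ) * x / 2 = n * (x/2) := by ring
  rw [h]
  have := abs_sin_nat_mul_le n (x/2)
  have h2 : Real.sin (n * (x/2))^2 ≤ (n * |Real.sin (x/2)|)^2 := by
    rw [← sq_abs]
    apply sq_le_sq' <;> nlinarith [abs_nonneg (Real.sin (n * (x/2)))]
  rw [mul_pow, sq_abs] at h2
  nlinarith

lemma two_le_sq_mul_one_sub_cos (K : ℕ) (hK : 2 ≤ K) : (2:ℝ) ≤ (K:ℝ)^2 * (1 - Real.cos (π / K)) := by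
  have hKpos : (0:ℝ) < K := by positivity
  have h1 : 1 - Real.cos (π / K) = 2 * Real.sin (π / K / 2)^2 := one_sub_cos_eq _
  have harg : π / K / 2 = π / (2*K) := by ring
  have hle : (1:ℝ)/K ≤ Real.sin (π / (2*K)) := by
    have hK1 : (1:ℝ) ≤ K := by exact_mod_cast Nat.one_le_of_lt hK
    have hx2 : π/(2*(K:ℝ)) ≤ π/2 := by
      rw [div_le_div_iff₀ (by positivity) (by norm_num)]
      nlinarith [Real.pi_pos]
    have := Real.mul_le_sin (x := π/(2*(K:ℝ))) (by positivity) hx2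
    calc (1:ℝ)/K = 2/π * (π/(2*K)) := by field_simp
      _ ≤ _ := this
  rw [h1, harg]
  have h0 : (0:ℝ) ≤ 1/K := by positivity
  have hsq : (1/K:ℝ)^2 ≤ Real.sin (π/(2*K))^2 := by
    apply sq_le_sq' <;> nlinarith
  have hk2 : (K:ℝ)^2 * (1/K)^2 = 1 := by
    field_simp
  nlinarith [sq_nonneg (K:ℝ)]
set_option maxHeartbeats 1000000 in
/-- Proposition 1: under the sufficient condition on `K², R, ζ`, the point `ω = 0`
is a global maximizer of `F` over `[0, 2π)`. -/
theorem stmt_0 (K : ℕ) (hK : 2 ≤ K) (R ζ : ℝ) (hR : 1 < R) (hζ : 1 < ζ)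
    (ηH a b : ℝ)
    (hηH : ηH = 1 / (R ^ K + R⁻¹ ^ K))
    (ha : a = ζ * R + ζ⁻¹ * R⁻¹)
    (hb : b = R + R⁻¹)
    (F : ℝ → ℝ)
    (hF : ∀ ω : ℝ, F ω =
      ((2 * Real.cos ω - a) / (2 * Real.cos ω - b)) * (1 - 2 * ηH * Real.cos (K * ω)))
    (hcond : (K : ℝ) ^ 2 <
      (1 / ηH) * ((a - b) * (1 - 2 * ηH)) /
        ((a - 2 * Real.cos (π / K)) * (b - 2 * Real.cos (π / K)))) :
    ∀ ω ∈ Set.Ico (0 : ℝ) (2 * π), F ω ≤ F 0 := by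
  intro ω _
  -- basic positivity facts
  have hRinv : 0 < R⁻¹ := by positivity
  have hRR : R * R⁻¹ = 1 := mul_inv_cancel₀ (by positivity)
  have hζinv : 0 < ζ⁻¹ := by positivity
  have hζζ : ζ * ζ⁻¹ = 1 := mul_inv_cancel₀ (by positivity)
  have hb2 : 2 < b := by
    rw [hb]
    nlinarith [mul_pos (mul_pos (sub_pos.2 hR) (sub_pos.2 hR)) hRinv]
  have hab : b < a := by
    have hdiff : a - b = (ζ - 1) * (R - R⁻¹ * ζ⁻¹) := by
      rw [ha, hb]; field_simp; ring
    have h1 : R⁻¹ * ζ⁻¹ < 1 := by nlinarith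
    nlinarith [mul_pos (sub_pos.2 hζ) (show (0:ℝ) < R - R⁻¹ * ζ⁻¹ by nlinarith)]
  -- ηH facts
  have hRK : 1 < R ^ K := one_lt_pow₀ hR (by omega)
  have hRKi : R ^ K * (R⁻¹ ^ K) = 1 := by
    rw [← mul_pow, hRR, one_pow]
  have hsum2 : 2 < R ^ K + R⁻¹ ^ K := by
    have hpos : 0 < R⁻¹ ^ K := by positivity
    nlinarith [mul_pos (mul_pos (sub_pos.2 hRK) (sub_pos.2 hRK)) hpos]
  have hη0 : 0 < ηH := by rw [hηH]; positivity
  have hη1 : 2 * ηH < 1 := by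
    rw [hηH]
    rw [mul_one_div, div_lt_one (by linarith)]
    linarith
  -- cosine facts
  set c := Real.cos ω with hc
  set cK := Real.cos ((K : ℝ) * ω) with hcKdef
  set cπ := Real.cos (π / K) with hcπdef
  have hc1 : c ≤ 1 := Real.cos_le_one ω
  have hcm1 : -1 ≤ c := Real.neg_one_le_cos ω
  have hcK1 : -1 ≤ cK := Real.neg_one_le_cos _
  have hcπm1 : -1 ≤ cπ := Real.neg_one_le_cos _
  have hKpos : (0:ℝ) < (K:ℝ)^2 := by positivity
  have hK4 : (4:ℝ) ≤ (K:ℝ)^2 := by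
    have : (2:ℝ) ≤ (K:ℝ) := by exact_mod_cast hK
    nlinarith
  have h2KC : (2:ℝ) ≤ (K:ℝ)^2 * (1 - cπ) := two_le_sq_mul_one_sub_cos K hK
  have hcπ1 : cπ < 1 := by nlinarith [h2KC, hKpos]
  have hkey1 : 1 - cK ≤ (K:ℝ)^2 * (1 - c) := one_sub_cos_nat_mul_le K ω
  have h1c : 0 ≤ 1 - c := by linarith
  -- the rearranged condition
  set D := (a - 2 * cπ) * (b - 2 * cπ) with hD
  have hDpos : 0 < D := by
    have h1 : 0 < a - 2 * cπ := by linarith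
    have h2 : 0 < b - 2 * cπ := by linarith
    rw [hD]; exact mul_pos h1 h2
  have hcond' : ηH * ((K:ℝ)^2 * D) < (a - b) * (1 - 2 * ηH) := by
    have h := mul_lt_mul_of_pos_right hcond (show 0 < ηH * D by positivity)
    have he : 1 / ηH * ((a - b) * (1 - 2 * ηH)) / D * (ηH * D)
        = (a - b) * (1 - 2 * ηH) := by
      field_simp
    rw [he] at h
    nlinarith [h]
  -- the key claim
  have hC : (1 - cK) * (a - 2*c) * (b - 2) ≤ (K:ℝ)^2 * (1 - c) * D := by
    have hac : 0 ≤ a - 2*c := by linarith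
    have hbc2 : b - 2 ≤ b - 2*cπ := by linarith
    have hb20 : 0 ≤ b - 2 := by linarith
    rcases le_or_gt cπ c with hcase | hcase
    · -- near 0 : use 1 - cK ≤ K²(1-c) and a-2c ≤ a-2cπ
      have t1 : (1 - cK) * (a - 2*c) ≤ ((K:ℝ)^2 * (1 - c)) * (a - 2*cπ) :=
        mul_le_mul hkey1 (by linarith) hac (mul_nonneg (by positivity) h1c)
      have t2 : (1 - cK) * (a - 2*c) * (b - 2)
          ≤ ((K:ℝ)^2 * (1 - c)) * (a - 2*cπ) * (b - 2*cπ) := by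
        apply mul_le_mul t1 hbc2 hb20
        have h1 : 0 ≤ a - 2*cπ := by linarith
        exact mul_nonneg (mul_nonneg (by positivity) h1c) h1
      calc (1 - cK) * (a - 2*c) * (b - 2)
          ≤ ((K:ℝ)^2 * (1 - c)) * (a - 2*cπ) * (b - 2*cπ) := t2
        _ = (K:ℝ)^2 * (1 - c) * D := by rw [hD]; ring
    · -- far from 0 : use 1 - cK ≤ 2 and a linear-in-c estimate
      have hL : 2 * (a - 2*c) ≤ (K:ℝ)^2 * (1 - c) * (a - 2*cπ) := by
        have hPcπ : 0 ≤ ((K:ℝ)^2 * (1 - cπ) - 2) * (a - 2*cπ) :=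
          mul_nonneg (by linarith) (by linarith)
        have hPm1 : 0 ≤ 2 * (K:ℝ)^2 * (a - 2*cπ) - 2*a - 4 := by
          nlinarith [mul_le_mul_of_nonneg_right hK4 (show (0:ℝ) ≤ a - 2 by linarith), h2KC]
        nlinarith [mul_nonneg (show (0:ℝ) ≤ cπ - c by linarith) hPm1,
          mul_nonneg (show (0:ℝ) ≤ c + 1 by linarith) hPcπ]
      have t1 : (1 - cK) * (a - 2*c) ≤ 2 * (a - 2*c) :=
        mul_le_mul_of_nonneg_right (by linarith) hac
      have t2 : (1 - cK) * (a - 2*c) * (b - 2) ≤ ((K:ℝ)^2 * (1 - c) * (a - 2*cπ)) * (b - 2*cπ) := by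
        apply mul_le_mul (le_trans t1 hL) hbc2 hb20
        have h1 : 0 ≤ a - 2*cπ := by linarith
        exact mul_nonneg (mul_nonneg (by positivity) h1c) h1
      calc (1 - cK) * (a - 2*c) * (b - 2)
          ≤ ((K:ℝ)^2 * (1 - c) * (a - 2*cπ)) * (b - 2*cπ) := t2
        _ = (K:ℝ)^2 * (1 - c) * D := by rw [hD]; ring
  -- conclude
  rw [hF ω, hF 0]
  have h00 : Real.cos ((K:ℝ) * (0:ℝ)) = 1 := by norm_num
  rw [Real.cos_zero, h00]
  have hbc : 0 < b - 2*c := by linarith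
  have e1 : (2 * c - a) / (2 * c - b) = (a - 2*c) / (b - 2*c) := by
    rw [show 2*c - a = -(a - 2*c) by ring, show 2*c - b = -(b - 2*c) by ring,
      neg_div_neg_eq]
  have e0 : (2 * 1 - a) / (2 * 1 - b) = (a - 2) / (b - 2) := by
    rw [show 2*(1:ℝ) - a = -(a - 2) by ring, show 2*(1:ℝ) - b = -(b - 2) by ring,
      neg_div_neg_eq]
  rw [e1, e0, div_mul_eq_mul_div, div_mul_eq_mul_div,
    div_le_div_iff₀ hbc (by linarith : (0:ℝ) < b - 2)]
  have m1 : ηH * ((1 - cK) * (a - 2*c) * (b - 2)) ≤ ηH * ((K:ℝ)^2 * (1 - c) * D) :=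
    mul_le_mul_of_nonneg_left hC hη0.le
  have m2 : ηH * ((K:ℝ)^2 * D) * (1 - c) ≤ (a - b) * (1 - 2*ηH) * (1 - c) :=
    mul_le_mul_of_nonneg_right hcond'.le h1c
  nlinarith [m1, m2]
end

section
/- Let K ≥ 1 be an integer, let ρ_0, …, ρ_{K−1} > 0 and ψ_0, …, ψ_{K−1} ∈ ℝ. For a bit vector b ∈ {0,1}^K, define zeros α_k(b) := ρ_k·e^{iψ_k} if b_k = 1 and α_k(b) := ρ_k^{-1}·e^{iψ_k} if b_k = 0, and let X_b(z) := c_b·∏_{k=0}^{K−1}(z − α_k(b)), where c_b > 0 is the unique positive real such that the sum of the squared moduli of the K+1 coefficients of X_b equals K + 1. Then for any two bit vectors b, b′ ∈ {0,1}^K and every ω ∈ ℝ, one has |X_b(e^{iω})| = |X_{b′}(e^{iω})|. -/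
open Polynomial

open Complex Finset

lemma root_sum (N : ℕ) (hN : 0 < N) (m n : ℕ) (hm : m < N) (hn : n < N) :
    ∑ j ∈ Finset.range N,
      (Complex.exp (2 * Real.pi * Complex.I / N) ^ m *
       (starRingEnd ℂ) (Complex.exp (2 * Real.pi * Complex.I / N)) ^ n) ^ j
      = if m = n then (N : ℂ) else 0 := by
  set ζ := Complex.exp (2 * Real.pi * Complex.I / N) with hζ
  have hprim : IsPrimitiveRoot ζ N := Complex.isPrimitiveRoot_exp N hN.ne'
  have habs : ‖ζ‖ = 1 := by
    rw [hζ, Complex.norm_exp]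
    norm_num [Complex.div_re, Complex.normSq]
  have hζ0 : ζ ≠ 0 := hprim.ne_zero hN.ne'
  have hconj : (starRingEnd ℂ) ζ = ζ⁻¹ := (Complex.inv_eq_conj habs).symm
  rcases eq_or_ne m n with h | h
  · subst h
    have : ζ ^ m * (starRingEnd ℂ) ζ ^ m = 1 := by
      rw [hconj, ← mul_pow, mul_inv_cancel₀ hζ0, one_pow]
    simp [this]
  · have hu : ζ ^ m * (starRingEnd ℂ) ζ ^ n = ζ ^ ((m : ℤ) - n) := by
      rw [hconj, ← zpow_natCast ζ m, ← zpow_natCast (ζ⁻¹) n, inv_zpow, ← zpow_neg,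
        ← zpow_add₀ hζ0]
      ring_nf
    have hune : ζ ^ m * (starRingEnd ℂ) ζ ^ n ≠ 1 := by
      rw [hu, Ne, hprim.zpow_eq_one_iff_dvd]
      intro hdvd
      have h0 := Int.eq_zero_of_abs_lt_dvd hdvd (by rw [abs_sub_lt_iff]; constructor <;> omega)
      exact h (by omega)
    have huN : (ζ ^ m * (starRingEnd ℂ) ζ ^ n) ^ N = 1 := by
      rw [hu, ← zpow_natCast, ← zpow_mul, mul_comm, zpow_mul, zpow_natCast,
        hprim.pow_eq_one, one_zpow]
    rw [geom_sum_eq hune, huN, sub_self, zero_div, if_neg h]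

lemma parseval (N : ℕ) (hN : 0 < N) (P : Polynomial ℂ) (hP : P.natDegree < N) :
    ∑ j ∈ Finset.range N,
      ‖P.eval (Complex.exp (Complex.I * ((2 * Real.pi * j / N : ℝ) : ℂ)))‖ ^ 2
      = N * ∑ m ∈ Finset.range N, ‖P.coeff m‖ ^ 2 := by
  set ζ := Complex.exp (2 * Real.pi * Complex.I / N) with hζ
  have hev : ∀ j : ℕ, Complex.exp (Complex.I * ((2 * Real.pi * j / N : ℝ) : ℂ)) = ζ ^ j := by
    intro j
    rw [hζ, ← Complex.exp_nat_mul]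
    congr 1
    push_cast
    ring
  -- complex-valued identity
  have key : ∑ j ∈ Finset.range N,
      (P.eval (ζ ^ j) * (starRingEnd ℂ) (P.eval (ζ ^ j)))
      = N * ∑ m ∈ Finset.range N, (P.coeff m * (starRingEnd ℂ) (P.coeff m)) := by
    have hsum : ∀ x : ℂ, P.eval x = ∑ m ∈ Finset.range N, P.coeff m * x ^ m := fun x =>
      Polynomial.eval_eq_sum_range' hP x
    calc ∑ j ∈ Finset.range N, (P.eval (ζ ^ j) * (starRingEnd ℂ) (P.eval (ζ ^ j)))
        = ∑ j ∈ Finset.range N, ∑ m ∈ Finset.range N, ∑ n ∈ Finset.range N,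
            (P.coeff m * (starRingEnd ℂ) (P.coeff n)) * (ζ ^ m * (starRingEnd ℂ) ζ ^ n) ^ j := by
          refine Finset.sum_congr rfl fun j _ => ?_
          rw [hsum, map_sum, Finset.sum_mul_sum]
          refine Finset.sum_congr rfl fun m _ => Finset.sum_congr rfl fun n _ => ?_
          simp only [map_mul, map_pow]
          ring
      _ = ∑ m ∈ Finset.range N, ∑ n ∈ Finset.range N,
            (P.coeff m * (starRingEnd ℂ) (P.coeff n)) *
              ∑ j ∈ Finset.range N, (ζ ^ m * (starRingEnd ℂ) ζ ^ n) ^ j := by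
          rw [Finset.sum_comm]
          refine Finset.sum_congr rfl fun m _ => ?_
          rw [Finset.sum_comm]
          refine Finset.sum_congr rfl fun n _ => ?_
          rw [Finset.mul_sum]
      _ = ∑ m ∈ Finset.range N, ∑ n ∈ Finset.range N,
            (P.coeff m * (starRingEnd ℂ) (P.coeff n)) * (if m = n then (N : ℂ) else 0) := by
          refine Finset.sum_congr rfl fun m hm => Finset.sum_congr rfl fun n hn => ?_
          rw [root_sum N hN m n (Finset.mem_range.mp hm) (Finset.mem_range.mp hn)]
      _ = N * ∑ m ∈ Finset.range N, (P.coeff m * (starRingEnd ℂ) (P.coeff m)) := by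
          rw [Finset.mul_sum]
          refine Finset.sum_congr rfl fun m hm => ?_
          rw [Finset.sum_eq_single m (fun n _ hn => by rw [if_neg (fun h => hn h.symm), mul_zero])
            (fun h => absurd hm h)]
          rw [if_pos rfl]; ring
  -- take real parts
  have hre : ∀ w : ℂ, ‖w‖ ^ 2 = (w * (starRingEnd ℂ) w).re := by
    intro w
    rw [Complex.mul_conj, Complex.ofReal_re]
    exact Complex.sq_norm w
  calc ∑ j ∈ Finset.range N,
      ‖P.eval (Complex.exp (Complex.I * ((2 * Real.pi * j / N : ℝ) : ℂ)))‖ ^ 2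
      = (∑ j ∈ Finset.range N, (P.eval (ζ ^ j) * (starRingEnd ℂ) (P.eval (ζ ^ j)))).re := by
        rw [Complex.re_sum]
        exact Finset.sum_congr rfl fun j _ => by rw [hev j, hre]
    _ = ((N : ℂ) * ∑ m ∈ Finset.range N, (P.coeff m * (starRingEnd ℂ) (P.coeff m))).re := by
        rw [key]
    _ = N * ∑ m ∈ Finset.range N, ‖P.coeff m‖ ^ 2 := by
        rw [← Complex.ofReal_natCast, Complex.re_ofReal_mul, Complex.re_sum]
        congr 1
        exact Finset.sum_congr rfl fun m _ => (hre _).symm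


lemma flip_norm (z : ℂ) (hz : ‖z‖ = 1) (r : ℝ) (hr : 0 < r) :
    ‖z - (r : ℂ)‖ = r * ‖z - ((r : ℂ))⁻¹‖ := by
  have h1 : z * (starRingEnd ℂ) z = 1 := by
    have h2 : ‖z‖ = 1 := hz
    rw [Complex.mul_conj, Complex.normSq_eq_norm_sq, h2]
    norm_num
  have hrne : (r : ℂ) ≠ 0 := by exact_mod_cast hr.ne'
  have key : (r : ℂ) - z = (r : ℂ) * z * (starRingEnd ℂ) (z - ((r : ℂ))⁻¹) := by
    rw [map_sub, map_inv₀, Complex.conj_ofReal]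
    field_simp
    linear_combination (-(r : ℂ)) * h1
  rw [norm_sub_rev, key]
  simp only [norm_mul, RCLike.norm_conj, hz, Complex.norm_real]
  rw [Real.norm_of_nonneg hr.le]
  ring

lemma flip_factor (ω ψ : ℝ) (r : ℝ) (hr : 0 < r) :
    ‖Complex.exp (Complex.I * ω) - (r : ℂ) * Complex.exp (Complex.I * ψ)‖
      = r * ‖Complex.exp (Complex.I * ω) - ((r : ℂ))⁻¹ * Complex.exp (Complex.I * ψ)‖ := by
  have habsψ : ‖Complex.exp (Complex.I * (ψ : ℂ))‖ = 1 := by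
    simp [Complex.norm_exp]
  have hz : ‖Complex.exp (Complex.I * ((ω : ℂ) - ψ))‖ = 1 := by
    simp [Complex.norm_exp, Complex.sub_re, Complex.mul_re]
  have hfac : ∀ s : ℂ, Complex.exp (Complex.I * ω) - s * Complex.exp (Complex.I * ψ)
      = Complex.exp (Complex.I * ψ) * (Complex.exp (Complex.I * ((ω : ℂ) - ψ)) - s) := by
    intro s
    rw [mul_sub, ← Complex.exp_add]
    ring_nf
  rw [hfac, hfac, norm_mul, norm_mul, habsψ, one_mul, one_mul]
  exact flip_norm _ hz r hr

/-- The template transform is common to the whole BMOCZ codebook: any two codewords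
(energy-normalized polynomials whose zeros are selected by bit vectors from
conjugate-reciprocal pairs `{ρ_k e^{iψ_k}, ρ_k⁻¹ e^{iψ_k}}`) have the same
magnitude on the unit circle. -/
theorem stmt_9 (K : ℕ) (hK : 1 ≤ K) (ρ ψ : Fin K → ℝ) (hρ : ∀ k, 0 < ρ k)
    (b b' : Fin K → Bool) (c c' : ℝ) (hc : 0 < c) (hc' : 0 < c')
    (X X' : Polynomial ℂ)
    (hX : X = Polynomial.C (c : ℂ) * ∏ k : Fin K,
      (Polynomial.X - Polynomial.C
        ((if b k then (ρ k : ℂ) else (ρ k : ℂ)⁻¹) * Complex.exp (Complex.I * (ψ k)))))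
    (hX' : X' = Polynomial.C (c' : ℂ) * ∏ k : Fin K,
      (Polynomial.X - Polynomial.C
        ((if b' k then (ρ k : ℂ) else (ρ k : ℂ)⁻¹) * Complex.exp (Complex.I * (ψ k)))))
    (hE : ∑ j ∈ Finset.range (K + 1), ‖X.coeff j‖ ^ 2 = (K : ℝ) + 1)
    (hE' : ∑ j ∈ Finset.range (K + 1), ‖X'.coeff j‖ ^ 2 = (K : ℝ) + 1) :
    ∀ ω : ℝ, ‖X.eval (Complex.exp (Complex.I * ω))‖ =
      ‖X'.eval (Complex.exp (Complex.I * ω))‖ := by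
  -- ratio per factor
  set r : Fin K → ℝ := fun k => if b k = b' k then 1 else if b k then ρ k else (ρ k)⁻¹ with hr
  have hrpos : ∀ k, 0 < r k := by
    intro k
    simp only [hr]
    split_ifs
    · exact one_pos
    · exact hρ k
    · exact inv_pos.mpr (hρ k)
  set μ : ℝ := c * (∏ k : Fin K, r k) / c' with hμ
  have hprod : 0 < ∏ k : Fin K, r k := Finset.prod_pos fun k _ => hrpos k
  have hμpos : 0 < μ := by positivity
  -- pointwise relation
  have hfac : ∀ (ω : ℝ) (k : Fin K),
      ‖Complex.exp (Complex.I * ω) -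
        (if b k then (ρ k : ℂ) else (ρ k : ℂ)⁻¹) * Complex.exp (Complex.I * (ψ k))‖
      = r k * ‖Complex.exp (Complex.I * ω) -
        (if b' k then (ρ k : ℂ) else (ρ k : ℂ)⁻¹) * Complex.exp (Complex.I * (ψ k))‖ := by
    intro ω k
    by_cases hbb : b k = b' k
    · simp only [hr]
      rw [if_pos hbb, hbb, one_mul]
    · cases hb : b k
      · have hb' : b' k = true := by cases hb2 : b' k <;> simp_all
        simp only [hr, if_neg hbb, hb, hb', if_true, Bool.false_eq_true, if_false]
        have hff := flip_factor ω (ψ k) (ρ k) (hρ k)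
        rw [hff, ← mul_assoc, inv_mul_cancel₀ (hρ k).ne', one_mul]
      · have hb' : b' k = false := by cases hb2 : b' k <;> simp_all
        simp only [hr, if_neg hbb, hb, hb', if_true, Bool.false_eq_true, if_false]
        exact flip_factor ω (ψ k) (ρ k) (hρ k)
  have hpt : ∀ ω : ℝ, ‖X.eval (Complex.exp (Complex.I * ω))‖
      = μ * ‖X'.eval (Complex.exp (Complex.I * ω))‖ := by
    intro ω
    rw [hX, hX']
    simp only [Polynomial.eval_mul, Polynomial.eval_C, Polynomial.eval_prod,
      Polynomial.eval_sub, Polynomial.eval_X, norm_mul, Complex.norm_real, norm_prod]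
    rw [Finset.prod_congr rfl fun k _ => hfac ω k, Finset.prod_mul_distrib]
    rw [Real.norm_of_nonneg hc.le, Real.norm_of_nonneg hc'.le, hμ]
    field_simp
  -- Parseval step
  have hdegaux : ∀ (β : Fin K → Bool) (d : ℝ), (Polynomial.C (d : ℂ) * ∏ k : Fin K,
      (Polynomial.X - Polynomial.C
        ((if β k then (ρ k : ℂ) else (ρ k : ℂ)⁻¹) * Complex.exp (Complex.I * (ψ k))))).natDegree
        < K + 1 := by
    intro β d
    refine Nat.lt_succ_of_le (le_trans (Polynomial.natDegree_mul_le) ?_)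
    rw [Polynomial.natDegree_C, zero_add]
    refine le_trans (Polynomial.natDegree_prod_le _ _) ?_
    have h1 : ∑ k : Fin K, (Polynomial.X - Polynomial.C
        ((if β k then (ρ k : ℂ) else (ρ k : ℂ)⁻¹) * Complex.exp (Complex.I * (ψ k)))).natDegree
        ≤ ∑ _k : Fin K, 1 :=
      Finset.sum_le_sum fun k _ => le_of_eq (Polynomial.natDegree_X_sub_C _)
    simp only [Finset.sum_const, smul_eq_mul, mul_one, Finset.card_univ, Fintype.card_fin] at h1
    exact h1
  have hdeg : X.natDegree < K + 1 := hX ▸ hdegaux b c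
  have hdeg' : X'.natDegree < K + 1 := hX' ▸ hdegaux b' c'
  have hpar := parseval (K + 1) (Nat.succ_pos K) X hdeg
  have hpar' := parseval (K + 1) (Nat.succ_pos K) X' hdeg'
  rw [hE] at hpar
  rw [hE'] at hpar'
  have hsum : ∑ j ∈ Finset.range (K + 1),
      ‖X.eval (Complex.exp (Complex.I * ((2 * Real.pi * j / ((K + 1 : ℕ) : ℝ) : ℝ) : ℂ)))‖ ^ 2
      = μ ^ 2 * ∑ j ∈ Finset.range (K + 1),
      ‖X'.eval (Complex.exp (Complex.I * ((2 * Real.pi * j / ((K + 1 : ℕ) : ℝ) : ℝ) : ℂ)))‖ ^ 2 := by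
    rw [Finset.mul_sum]
    refine Finset.sum_congr rfl fun j _ => ?_
    rw [hpt (2 * Real.pi * j / ((K + 1 : ℕ) : ℝ)), mul_pow]
  rw [hpar, hpar'] at hsum
  have hNpos : (0 : ℝ) < ((K + 1 : ℕ) : ℝ) * ((K : ℝ) + 1) := by positivity
  have h0 : (μ ^ 2 - 1) * (((K + 1 : ℕ) : ℝ) * ((K : ℝ) + 1)) = 0 := by
    linear_combination -hsum
  have hμ2 : μ ^ 2 = 1 := by
    rcases mul_eq_zero.mp h0 with h | h
    · linarith
    · linarith
  have hμ1 : μ = 1 := by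
    have h1 : (μ - 1) * (μ + 1) = 0 := by linear_combination hμ2
    rcases mul_eq_zero.mp h1 with h | h
    · linarith
    · linarith
  intro ω
  rw [hpt ω, hμ1, one_mul]
end

section
/- Let K ≥ 1 be an integer and R > 1 a real, and set η_H := 1/(R^K + R^{-K}). For a bit vector b ∈ {0,1}^K, define zeros α_k(b) := R·e^{2πik/K} if b_k = 1 and α_k(b) := R^{-1}·e^{2πik/K} if b_k = 0, and let X_b(z) := c_b·∏_{k=0}^{K−1}(z − α_k(b)), where c_b > 0 is the unique positive real such that the sum of the squared moduli of the K+1 coefficients of X_b equals K + 1. Then for every ω ∈ ℝ, |X_b(e^{iω})|² = (K + 1)·(1 − 2η_H·cos(Kω)). -/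
open Polynomial Real

-- Lemma A: reflection on circle
lemma circ_refl (z w : ℂ) (hz : ‖z‖ = 1) (hw : ‖w‖ = 1) (R : ℝ) (hR : 0 < R) :
    ‖z - (R:ℂ)⁻¹ * w‖ = R⁻¹ * ‖z - (R:ℂ) * w‖ := by
  have hz1 : z * (starRingEnd ℂ) z = 1 := by
    rw [Complex.mul_conj, Complex.normSq_eq_norm_sq, hz]; norm_num
  have hw1 : w * (starRingEnd ℂ) w = 1 := by
    rw [Complex.mul_conj, Complex.normSq_eq_norm_sq, hw]; norm_num
  have hR0 : (R:ℂ) ≠ 0 := by exact_mod_cast hR.ne'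
  have key : z - (R:ℂ)⁻¹ * w = -(R:ℂ)⁻¹ * (z * w * (starRingEnd ℂ) (z - (R:ℂ) * w)) := by
    rw [map_sub, map_mul, Complex.conj_ofReal]
    linear_combination (-z) * hw1 + (R:ℂ)⁻¹ * w * hz1 - z * w * (starRingEnd ℂ) w * mul_inv_cancel₀ hR0
  rw [key]
  rw [norm_mul, norm_neg, norm_inv, norm_mul, norm_mul, Complex.norm_conj]
  simp [hz, hw, Complex.norm_real, abs_of_pos hR]

-- Lemma B: product of zeros on circle radius R
lemma prod_circle (K : ℕ) (hK : 1 ≤ K) (R : ℂ) (u : ℂ) :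
    ∏ k : Fin K, (u - R * Complex.exp (2 * π * Complex.I * k / K)) = u ^ K - R ^ K := by
  have hK0 : (K : ℕ) ≠ 0 := by omega
  have hζ : IsPrimitiveRoot (Complex.exp (2 * π * Complex.I / K)) K :=
    Complex.isPrimitiveRoot_exp K hK0
  have := X_pow_sub_C_eq_prod (R := ℂ) hζ (α := R) (a := R ^ K) (by omega) rfl
  have h2 := congrArg (Polynomial.eval u) this
  simp only [eval_sub, eval_pow, eval_X, eval_C, eval_prod, eval_mul] at h2
  rw [Fin.prod_univ_eq_prod_range (fun k => (u - R * Complex.exp (2 * π * Complex.I * k / K)))]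
  rw [h2]
  apply Finset.prod_congr rfl
  intro i _
  rw [← Complex.exp_nat_mul]
  ring_nf

lemma key_eval (K : ℕ) (hK : 1 ≤ K) (R : ℝ) (hR : 1 < R) (b : Fin K → Bool) (c : ℝ)
    (X : Polynomial ℂ)
    (hX : X = Polynomial.C (c : ℂ) * ∏ k : Fin K,
      (Polynomial.X - Polynomial.C
        ((if b k then (R : ℂ) else (R : ℂ)⁻¹) *
          Complex.exp (2 * π * Complex.I * k / K)))) (ω : ℝ) :
    ‖X.eval (Complex.exp (Complex.I * ω))‖ ^ 2 =
      (c ^ 2 * ∏ k : Fin K, (if b k then (1:ℝ) else R⁻¹ ^ 2)) *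
        ((1 + R ^ (2 * K)) - 2 * R ^ K * Real.cos (K * ω)) := by
  have hR0 : (0:ℝ) < R := lt_trans one_pos hR
  set z := Complex.exp (Complex.I * ω) with hzdef
  have hz : ‖z‖ = 1 := by
    simp [hzdef, Complex.norm_exp]
  have hw : ∀ k : Fin K, ‖Complex.exp (2 * π * Complex.I * k / K)‖ = 1 := by
    intro k
    simp [Complex.norm_exp]
  have hfac : ∀ k : Fin K,
      ‖z - (if b k then (R : ℂ) else (R : ℂ)⁻¹) * Complex.exp (2 * π * Complex.I * k / K)‖ ^ 2
      = (if b k then (1:ℝ) else R⁻¹ ^ 2) *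
        ‖z - (R : ℂ) * Complex.exp (2 * π * Complex.I * k / K)‖ ^ 2 := by
    intro k
    cases hbk : b k with
    | true => simp
    | false =>
      simp only [if_neg Bool.false_ne_true]
      rw [circ_refl z _ hz (hw k) R hR0, mul_pow]
  have hprod : ‖∏ k : Fin K, (z - (R : ℂ) * Complex.exp (2 * π * Complex.I * k / K))‖ ^ 2
      = (1 + R ^ (2 * K)) - 2 * R ^ K * Real.cos (K * ω) := by
    rw [prod_circle K hK]
    have hzK : z ^ K = Complex.exp ((K * ω : ℝ) * Complex.I) := by
      rw [hzdef, ← Complex.exp_nat_mul]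
      congr 1
      push_cast
      ring
    rw [hzK, show ((R:ℂ)^K) = ((R^K : ℝ):ℂ) by push_cast; ring,
      Complex.sq_norm, Complex.normSq_apply]
    simp only [Complex.sub_re, Complex.sub_im, Complex.exp_ofReal_mul_I_re,
      Complex.exp_ofReal_mul_I_im, Complex.ofReal_re, Complex.ofReal_im]
    have hs := Real.sin_sq_add_cos_sq ((K:ℝ) * ω)
    rw [pow_mul']
    nlinarith [hs]
  calc ‖X.eval z‖ ^ 2
      = c ^ 2 * ∏ k : Fin K,
          ‖z - (if b k then (R : ℂ) else (R : ℂ)⁻¹) * Complex.exp (2 * π * Complex.I * k / K)‖ ^ 2 := by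
        rw [hX]
        simp only [eval_mul, eval_C, eval_prod, eval_sub, eval_X, norm_mul, norm_prod, mul_pow,
          Finset.prod_pow]
        congr 1
        rw [Complex.norm_real, Real.norm_eq_abs, sq_abs]
    _ = (c ^ 2 * ∏ k : Fin K, (if b k then (1:ℝ) else R⁻¹ ^ 2)) *
        ((1 + R ^ (2 * K)) - 2 * R ^ K * Real.cos (K * ω)) := by
        rw [Finset.prod_congr rfl (fun k _ => hfac k), Finset.prod_mul_distrib,
          Finset.prod_pow, ← norm_prod, hprod]
        ring

/-- Huffman BMOCZ auto-correlation on the unit circle (Eq. (12)): every codeword of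
the Huffman BMOCZ codebook (zeros at radii `R` or `R⁻¹` with phases `2πk/K`,
coefficient energy `K + 1`) satisfies
`|X_b(e^{iω})|² = (K + 1)(1 − 2η_H cos(Kω))` with `η_H = 1/(R^K + R^{−K})`. -/
theorem stmt_10 (K : ℕ) (hK : 1 ≤ K) (R : ℝ) (hR : 1 < R)
    (ηH : ℝ) (hηH : ηH = 1 / (R ^ K + R⁻¹ ^ K))
    (b : Fin K → Bool) (c : ℝ) (hc : 0 < c)
    (X : Polynomial ℂ)
    (hX : X = Polynomial.C (c : ℂ) * ∏ k : Fin K,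
      (Polynomial.X - Polynomial.C
        ((if b k then (R : ℂ) else (R : ℂ)⁻¹) *
          Complex.exp (2 * π * Complex.I * k / K))))
    (hE : ∑ j ∈ Finset.range (K + 1), ‖X.coeff j‖ ^ 2 = (K : ℝ) + 1) :
    ∀ ω : ℝ, ‖X.eval (Complex.exp (Complex.I * ω))‖ ^ 2 =
      ((K : ℝ) + 1) * (1 - 2 * ηH * Real.cos (K * ω)) := by
  have hR0 : (0:ℝ) < R := lt_trans one_pos hR
  set D : ℝ := c ^ 2 * ∏ k : Fin K, (if b k then (1:ℝ) else R⁻¹ ^ 2) with hD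
  have key : ∀ ω : ℝ, ‖X.eval (Complex.exp (Complex.I * ω))‖ ^ 2 =
      D * ((1 + R ^ (2 * K)) - 2 * R ^ K * Real.cos (K * ω)) :=
    fun ω => key_eval K hK R hR b c X hX ω
  -- degree bound
  have hdeg : X.natDegree < K + 1 := by
    rw [hX]
    have h1 : (∏ k : Fin K, (Polynomial.X - Polynomial.C
        ((if b k then (R : ℂ) else (R : ℂ)⁻¹) *
          Complex.exp (2 * π * Complex.I * k / K)))).natDegree ≤ K := by
      refine le_trans (Polynomial.natDegree_prod_le _ _) ?_
      simp [Polynomial.natDegree_X_sub_C]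
    have h2 := Polynomial.natDegree_mul_le (p := Polynomial.C (c:ℂ)) (q := ∏ k : Fin K,
      (Polynomial.X - Polynomial.C
        ((if b k then (R : ℂ) else (R : ℂ)⁻¹) *
          Complex.exp (2 * π * Complex.I * k / K))))
    simp only [Polynomial.natDegree_C, zero_add] at h2
    omega
  -- the reversed-conjugate polynomial
  set Y : Polynomial ℂ := ∑ j ∈ Finset.range (K + 1),
    Polynomial.C ((starRingEnd ℂ) (X.coeff (K - j))) * Polynomial.X ^ j with hY
  have hpowR : R ^ (2 * K) = R ^ K * R ^ K := by rw [two_mul, pow_add]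
  set A : ℝ := D * (1 + R ^ (2 * K)) with hA
  set B : ℝ := D * R ^ K with hB
  set S : Polynomial ℂ := Polynomial.C ((A:ℝ) : ℂ) * Polynomial.X ^ K -
    Polynomial.C ((B:ℝ) : ℂ) * (Polynomial.X ^ (2*K) + 1) with hS
  have hYeval : ∀ z : ℂ, ‖z‖ = 1 →
      Y.eval z = z ^ K * (starRingEnd ℂ) (X.eval z) := by
    intro z hz
    have hz1 : z * (starRingEnd ℂ) z = 1 := by
      rw [Complex.mul_conj, Complex.normSq_eq_norm_sq, hz]; norm_num
    have hYz : Y.eval z = ∑ j ∈ Finset.range (K + 1),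
        (starRingEnd ℂ) (X.coeff (K - j)) * z ^ j := by
      rw [hY, Polynomial.eval_finset_sum]
      simp
    have h2 : z ^ K * (starRingEnd ℂ) (X.eval z) = ∑ j ∈ Finset.range (K + 1),
        (starRingEnd ℂ) (X.coeff j) * z ^ (K - j) := by
      rw [Polynomial.eval_eq_sum_range' hdeg, map_sum, Finset.mul_sum]
      refine Finset.sum_congr rfl ?_
      intro j hj
      have hj' : j ≤ K := by simpa [Nat.lt_succ_iff] using hj
      simp only [map_mul, map_pow]
      have hsplit : z ^ K = z ^ (K - j) * z ^ j := by
        rw [← pow_add]; congr 1; omega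
      rw [hsplit]
      have hzj : z ^ j * (starRingEnd ℂ) z ^ j = 1 := by
        rw [← mul_pow, hz1, one_pow]
      linear_combination ((starRingEnd ℂ) (X.coeff j)) * z ^ (K - j) * hzj
    rw [hYz, h2]
    have hrefl := Finset.sum_range_reflect
      (fun j => (starRingEnd ℂ) (X.coeff j) * z ^ (K - j)) (K + 1)
    rw [← hrefl]
    refine Finset.sum_congr rfl ?_
    intro j hj
    have hj' : j ≤ K := by simpa [Nat.lt_succ_iff] using hj
    have e1 : K + 1 - 1 - j = K - j := by omega
    have e2 : K - (K - j) = j := by omega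
    rw [e1, e2]
  -- polynomial identity
  have hQS : X * Y = S := by
    apply Polynomial.eq_of_infinite_eval_eq
    have hinj : Set.InjOn (fun t : ℝ => Complex.exp (Complex.I * t)) (Set.Ioo 0 1) := by
      intro a ha b' hb' hab
      simp only at hab
      rw [Complex.exp_eq_exp_iff_exists_int] at hab
      obtain ⟨n, hn⟩ := hab
      have hc1 : (a : ℂ) = (b' : ℝ) + (n : ℂ) * (2 * π) := by
        apply mul_left_cancel₀ Complex.I_ne_zero
        rw [hn]; push_cast; ring
      have hr : a = b' + (n : ℝ) * (2 * π) := by exact_mod_cast hc1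
      have hπ := Real.pi_gt_three
      obtain ⟨ha1, ha2⟩ := ha
      obtain ⟨hb1, hb2⟩ := hb'
      rcases lt_trichotomy n 0 with h | h | h
      · have hn1 : n ≤ -1 := by omega
        have : (n : ℝ) ≤ -1 := by exact_mod_cast hn1
        nlinarith
      · rw [h] at hr; push_cast at hr; linarith
      · have hn1 : (1:ℤ) ≤ n := by omega
        have : (1:ℝ) ≤ (n : ℝ) := by exact_mod_cast hn1
        nlinarith
    apply Set.Infinite.mono (s := (fun t : ℝ => Complex.exp (Complex.I * t)) '' Set.Ioo 0 1)
    · intro z hz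
      obtain ⟨t, ht, rfl⟩ := hz
      set w := Complex.exp (Complex.I * t) with hw
      have hwn : ‖w‖ = 1 := by simp [hw, Complex.norm_exp]
      show (X * Y).eval w = S.eval w
      rw [Polynomial.eval_mul, hYeval w hwn]
      have hmc : X.eval w * (w ^ K * (starRingEnd ℂ) (X.eval w)) =
          w ^ K * ((‖X.eval w‖ ^ 2 : ℝ) : ℂ) := by
        rw [show X.eval w * (w ^ K * (starRingEnd ℂ) (X.eval w)) =
          w ^ K * (X.eval w * (starRingEnd ℂ) (X.eval w)) from by ring,
          Complex.mul_conj, Complex.normSq_eq_norm_sq]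
        try norm_cast
      rw [hmc, key t, hpowR]
      have hwK : w ^ K = Complex.exp ((((K:ℝ) * t : ℝ) : ℂ) * Complex.I) := by
        rw [hw, ← Complex.exp_nat_mul]
        congr 1; push_cast; ring
      have hce : ((Real.cos ((K:ℝ) * t) : ℝ) : ℂ) =
          (Complex.exp ((((K:ℝ) * t : ℝ) : ℂ) * Complex.I) +
            Complex.exp (-((((K:ℝ) * t : ℝ) : ℂ) * Complex.I))) / 2 := by
        rw [Complex.ofReal_cos, Complex.cos]
        ring_nf
      have hprod1 : Complex.exp ((((K:ℝ) * t : ℝ) : ℂ) * Complex.I) *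
          Complex.exp (-((((K:ℝ) * t : ℝ) : ℂ) * Complex.I)) = 1 := by
        rw [← Complex.exp_add]; simp
      rw [hS]
      simp only [Polynomial.eval_sub, Polynomial.eval_mul, Polynomial.eval_C,
        Polynomial.eval_pow, Polynomial.eval_X, Polynomial.eval_add, Polynomial.eval_one]
      have h2K : w ^ (2*K) = (w ^ K) * (w ^ K) := by rw [two_mul, pow_add]
      rw [h2K, hwK]
      have hAc : ((A : ℝ) : ℂ) = (D : ℝ) * (1 + ((R:ℝ):ℂ) ^ K * ((R:ℝ):ℂ) ^ K) := by
        rw [hA, hpowR]; push_cast; ring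
      have hBc : ((B : ℝ) : ℂ) = (D : ℝ) * ((R:ℝ):ℂ) ^ K := by
        rw [hB]; push_cast; ring
      rw [hAc, hBc]
      push_cast at hce hprod1 ⊢
      rw [hce]
      linear_combination (-(((D : ℝ) : ℂ) * ((R:ℝ):ℂ) ^ K)) * hprod1
    · exact Set.Infinite.image hinj (Set.Ioo_infinite (by norm_num))
  -- coefficient K comparison
  have hYc : ∀ j, j ≤ K → Y.coeff j = (starRingEnd ℂ) (X.coeff (K - j)) := by
    intro j hj
    rw [hY, Polynomial.finset_sum_coeff]
    simp only [Polynomial.coeff_C_mul, Polynomial.coeff_X_pow]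
    rw [Finset.sum_eq_single j]
    · simp
    · intro i _ hij; simp [Ne.symm hij]
    · intro h; exact absurd (Finset.mem_range.mpr (by omega)) h
  have hcoeffQ : (X * Y).coeff K = (((K : ℝ) + 1 : ℝ) : ℂ) := by
    rw [Polynomial.coeff_mul, Finset.Nat.sum_antidiagonal_eq_sum_range_succ_mk]
    have : ∀ i ∈ Finset.range (K + 1),
        X.coeff i * Y.coeff (K - i) = ((‖X.coeff i‖ ^ 2 : ℝ) : ℂ) := by
      intro i hi
      have hi' : i ≤ K := by simpa [Nat.lt_succ_iff] using hi
      rw [hYc (K - i) (by omega), show K - (K - i) = i from by omega,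
        Complex.mul_conj, Complex.normSq_eq_norm_sq]
      try norm_cast
    rw [Finset.sum_congr rfl this, ← Complex.ofReal_sum, hE]
  have hcoeffS : S.coeff K = ((A : ℝ) : ℂ) := by
    have h1 : ¬ (K = 2 * K) := by omega
    have h2 : ¬ (K = 0) := by omega
    rw [hS]
    simp [Polynomial.coeff_X_pow, Polynomial.coeff_one, h1, h2]
  have hAval : A = (K : ℝ) + 1 := by
    have h' : (((K:ℝ) + 1 : ℝ) : ℂ) = ((A : ℝ) : ℂ) := by
      rw [← hcoeffQ, hQS, hcoeffS]
    exact_mod_cast h'.symm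
  -- final computation
  intro ω
  rw [key ω]
  have hpow := hpowR
  have hinvK : R⁻¹ ^ K * R ^ K = 1 := by
    rw [← mul_pow, inv_mul_cancel₀ (ne_of_gt hR0), one_pow]
  have hden : R ^ K + R⁻¹ ^ K ≠ 0 := by positivity
  have hDRK : D * R ^ K = ((K : ℝ) + 1) * ηH := by
    rw [hηH]
    have hmul : D * R ^ K * (R ^ K + R⁻¹ ^ K) = D * (1 + R ^ K * R ^ K) := by
      linear_combination D * hinvK
    calc D * R ^ K = (D * R ^ K * (R ^ K + R⁻¹ ^ K)) / (R ^ K + R⁻¹ ^ K) := by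
          field_simp
      _ = (D * (1 + R ^ K * R ^ K)) / (R ^ K + R⁻¹ ^ K) := by rw [hmul]
      _ = ((K : ℝ) + 1) * (1 / (R ^ K + R⁻¹ ^ K)) := by
          rw [← hpow, ← hA, hAval]; ring
  have expand : ((K : ℝ) + 1) * (1 - 2 * ηH * Real.cos (K * ω)) =
      ((K : ℝ) + 1) - 2 * (((K : ℝ) + 1) * ηH) * Real.cos (K * ω) := by ring
  rw [expand, ← hDRK, ← hAval, hA]
  ring
end

section
/- Let K ≥ 2 be an integer and R > 1 a real, and set η_H := 1/(R^K + R^{-K}). Then: (i) 0 < η_H < 1/2; (ii) the supremum over ω ∈ [0, 2π) of the function ω ↦ (K+1)·(1 − 2η_H·cos(Kω)) equals (K+1)·(1 + 2η_H), attained at ω = π/K; and hence (iii) the ratio of this supremum to its mean value K+1, namely 1 + 2η_H, is strictly less than 2. -/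
open Real

/-- PAPR of Huffman BMOCZ with frequency mapping (Eq. (33)): with
`η_H = 1/(R^K + R^{−K})` one has (i) `0 < η_H < 1/2`; (ii) the supremum over
`[0, 2π)` of `ω ↦ (K+1)(1 − 2η_H cos(Kω))` equals `(K+1)(1 + 2η_H)`, attained at
`ω = π/K`; and (iii) the ratio `1 + 2η_H` of this supremum to the mean value `K+1`
is strictly less than `2`. -/
theorem stmt_11 (K : ℕ) (hK : 2 ≤ K) (R : ℝ) (hR : 1 < R)
    (ηH : ℝ) (hηH : ηH = 1 / (R ^ K + R⁻¹ ^ K)) :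
    (0 < ηH ∧ ηH < 1 / 2) ∧
      (sSup ((fun ω : ℝ => ((K : ℝ) + 1) * (1 - 2 * ηH * Real.cos (K * ω))) ''
          Set.Ico (0 : ℝ) (2 * π)) = ((K : ℝ) + 1) * (1 + 2 * ηH) ∧
        ((K : ℝ) + 1) * (1 - 2 * ηH * Real.cos (K * (π / K))) =
          ((K : ℝ) + 1) * (1 + 2 * ηH)) ∧
      1 + 2 * ηH < 2 := by
  have hRK : 1 < R ^ K := one_lt_pow₀ hR (by omega)
  have hRKpos : 0 < R ^ K := by positivity
  have hinv : R⁻¹ ^ K = (R ^ K)⁻¹ := by rw [inv_pow]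
  have hsum2 : 2 < R ^ K + R⁻¹ ^ K := by
    rw [hinv]
    nlinarith [sq_nonneg (R ^ K - 1), inv_pos.mpr hRKpos,
      mul_inv_cancel₀ (ne_of_gt hRKpos)]
  have hηpos : 0 < ηH := by
    rw [hηH]; positivity
  have hηlt : ηH < 1 / 2 := by
    rw [hηH]
    rw [div_lt_div_iff₀ (by linarith) (by norm_num)]
    linarith
  have hKpos : (0 : ℝ) < K := by positivity
  have hKne : (K : ℝ) ≠ 0 := ne_of_gt hKpos
  have hattain : ((K : ℝ) + 1) * (1 - 2 * ηH * Real.cos (K * (π / K))) =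
      ((K : ℝ) + 1) * (1 + 2 * ηH) := by
    rw [mul_div_cancel₀ _ hKne, Real.cos_pi]; ring
  refine ⟨⟨hηpos, hηlt⟩, ⟨?_, hattain⟩, by linarith⟩
  have hmem : π / K ∈ Set.Ico (0 : ℝ) (2 * π) := by
    constructor
    · positivity
    · have hK2 : (2 : ℝ) ≤ K := by exact_mod_cast hK
      rw [div_lt_iff₀ hKpos]
      nlinarith [pi_pos]
  apply le_antisymm
  · apply csSup_le (Set.Nonempty.image _ ⟨_, hmem⟩)
    rintro x ⟨ω, -, rfl⟩
    have h1 : -1 ≤ Real.cos (K * ω) := neg_one_le_cos _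
    have hK1 : (0 : ℝ) < (K : ℝ) + 1 := by positivity
    have : 1 - 2 * ηH * Real.cos (K * ω) ≤ 1 + 2 * ηH := by nlinarith
    exact mul_le_mul_of_nonneg_left this (le_of_lt hK1)
  · rw [← hattain]
    apply le_csSup
    · refine ⟨((K : ℝ) + 1) * (1 + 2 * ηH), ?_⟩
      rintro x ⟨ω, -, rfl⟩
      have h1 : -1 ≤ Real.cos (K * ω) := neg_one_le_cos _
      have hK1 : (0 : ℝ) < (K : ℝ) + 1 := by positivity
      have : 1 - 2 * ηH * Real.cos (K * ω) ≤ 1 + 2 * ηH := by nlinarith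
      exact mul_le_mul_of_nonneg_left this (le_of_lt hK1)
    · exact ⟨_, hmem, rfl⟩
end

section
/- Let K ≥ 2 be an integer and let R > 1 and ζ > 0 be reals. For reals r > 0, s > 0 define coefficients c_k(r, s) := −s·r^K if k = 0, c_k(r, s) := (1 − s)·r^{K−k} if 1 ≤ k ≤ K−1, and c_K(r, s) := 1. Then −∑_{k=0}^{K} c_k(R, ζ)·c_{K−k}(R^{-1}, ζ^{-1}) = ζ·R^K + ζ^{-1}·R^{-K} − (1 − ζ)(1 − ζ^{-1})·(R^{K−1} − R^{-(K−1)})/(R − R^{-1}). -/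
lemma geo_aux (R : ℝ) (hR : R ≠ 0) : ∀ n : ℕ,
    (∑ k ∈ Finset.Ico 1 (n + 1), R ^ (n + 1 - k) * R⁻¹ ^ k) * (R - R⁻¹)
      = R ^ n - R⁻¹ ^ n := by
  intro n
  induction n with
  | zero => simp
  | succ n ih =>
    rw [Finset.sum_Ico_succ_top (by omega : 1 ≤ n + 1)]
    have hsum : ∑ k ∈ Finset.Ico 1 (n + 1), R ^ (n + 1 + 1 - k) * R⁻¹ ^ k
        = R * ∑ k ∈ Finset.Ico 1 (n + 1), R ^ (n + 1 - k) * R⁻¹ ^ k := by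
      rw [Finset.mul_sum]
      apply Finset.sum_congr rfl
      intro k hk
      simp only [Finset.mem_Ico] at hk
      have : n + 1 + 1 - k = (n + 1 - k) + 1 := by omega
      rw [this, pow_succ]
      ring
    rw [hsum, add_mul, mul_assoc, ih]
    have h1 : R * R⁻¹ = 1 := mul_inv_cancel₀ hR
    have h2 : n + 1 + 1 - (n + 1) = 1 := by omega
    rw [h2]
    have e1 : R * (R ^ n - R⁻¹ ^ n) = R ^ (n + 1) - R * R⁻¹ ^ n := by ring
    rw [e1]
    have e2 : R ^ 1 * R⁻¹ ^ (n + 1) * (R - R⁻¹)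
        = R * R⁻¹ * (R * R⁻¹ ^ n) - R * R⁻¹ * (R⁻¹ * R⁻¹ ^ n) := by ring
    rw [e2, h1]
    ring

/-- Eq. (20)–(22): the normalization constant of the jutted BMOCZ auto-correlation.
With `c_0(r,s) = −s·r^K`, `c_k(r,s) = (1−s)·r^{K−k}` for `1 ≤ k ≤ K−1`, and
`c_K(r,s) = 1`, one has
`−∑_{k=0}^{K} c_k(R,ζ)·c_{K−k}(R⁻¹,ζ⁻¹)
  = ζR^K + ζ⁻¹R^{−K} − (1−ζ)(1−ζ⁻¹)·(R^{K−1} − R^{−(K−1)})/(R − R⁻¹)`. -/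
theorem stmt_13 (K : ℕ) (hK : 2 ≤ K) (R ζ : ℝ) (hR : 1 < R) (hζ : 0 < ζ)
    (c : ℕ → ℝ → ℝ → ℝ)
    (hc0 : ∀ r s : ℝ, c 0 r s = -s * r ^ K)
    (hcmid : ∀ k : ℕ, 1 ≤ k → k ≤ K - 1 → ∀ r s : ℝ, c k r s = (1 - s) * r ^ (K - k))
    (hcK : ∀ r s : ℝ, c K r s = 1) :
    -(∑ k ∈ Finset.range (K + 1), c k R ζ * c (K - k) R⁻¹ ζ⁻¹) =
      ζ * R ^ K + ζ⁻¹ * R⁻¹ ^ K -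
        (1 - ζ) * (1 - ζ⁻¹) * (R ^ (K - 1) - R⁻¹ ^ (K - 1)) / (R - R⁻¹) := by
  have hR0 : R ≠ 0 := by positivity
  have hden : R - R⁻¹ ≠ 0 := by
    have h1 : R⁻¹ < 1 := by rw [inv_lt_one_iff₀]; right; exact hR
    nlinarith
  have hsplit : ∑ k ∈ Finset.range (K + 1), c k R ζ * c (K - k) R⁻¹ ζ⁻¹
      = c 0 R ζ * c K R⁻¹ ζ⁻¹
        + (∑ k ∈ Finset.Ico 1 K, c k R ζ * c (K - k) R⁻¹ ζ⁻¹)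
        + c K R ζ * c 0 R⁻¹ ζ⁻¹ := by
    rw [Finset.sum_range_succ, Nat.sub_self, Finset.range_eq_Ico,
      Finset.sum_eq_sum_Ico_succ_bot (by omega : 0 < K)]
    simp
  have hmid : ∀ k ∈ Finset.Ico 1 K, c k R ζ * c (K - k) R⁻¹ ζ⁻¹
      = (1 - ζ) * (1 - ζ⁻¹) * (R ^ (K - k) * R⁻¹ ^ k) := by
    intro k hk
    simp only [Finset.mem_Ico] at hk
    rw [hcmid k hk.1 (by omega), hcmid (K - k) (by omega) (by omega)]
    have : K - (K - k) = k := by omega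
    rw [this]; ring
  rw [hsplit, Finset.sum_congr rfl hmid, hc0, hcK, hcK, hc0]
  have hS : (∑ k ∈ Finset.Ico 1 K, R ^ (K - k) * R⁻¹ ^ k)
      = (R ^ (K - 1) - R⁻¹ ^ (K - 1)) / (R - R⁻¹) := by
    have := geo_aux R hR0 (K - 1)
    have hK1 : K - 1 + 1 = K := by omega
    rw [hK1] at this
    rw [eq_div_iff hden]
    exact this
  rw [← Finset.mul_sum, hS]
  field_simp
  ring
end
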